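/- Let M be a compact connected Riemannian surface of index at most I in the sense that any I+1 pairwise disjoint open geodesic balls cannot all be unstable, and suppose every geodesic ball of radius greater than R_c in M is unstable. Then the intrinsic diameter of M is at most 2(I+1)·R_c. -/

import Mathlib

/-!
STATEMENT 17: Let M be a compact connected Riemannian surface of index at most
I, in the sense that any I+1 pairwise disjoint open geodesic balls cannot all
be unstable, and suppose every geodesic ball of radius greater than R_c in M
is unstable.  Then the intrinsic diameter of M is at most 2(I+1)·R_c.

M is modelled as a compact connected geodesic metric space: between any two
points p, q there is a minimizing geodesic Γ : [0, d(p,q)] → M (hypothesis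
`geodesic`); `unstable : Set M → Prop` is an abstract instability predicate.
-/

theorem stmt_17 {M : Type*} [MetricSpace M] [CompactSpace M] [Nonempty M]
    (hconn : ConnectedSpace M)
    (geodesic : ∀ p q : M, ∃ Γ : ℝ → M, Γ 0 = p ∧ Γ (dist p q) = q ∧
      ∀ s ∈ Set.Icc 0 (dist p q), ∀ t ∈ Set.Icc 0 (dist p q),
        dist (Γ s) (Γ t) = |s - t|)
    (unstable : Set M → Prop) (I : ℕ) (R_c : ℝ) (hRc : 0 < R_c)
    (hindex : ∀ f : Fin (I + 1) → Set M,
      (∀ i, IsOpen (f i) ∧ unstable (f i)) → Pairwise (Function.onFun Disjoint f) → False)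
    (hball : ∀ (x : M) (r : ℝ), R_c < r → unstable (Metric.ball x r)) :
    Metric.diam (Set.univ : Set M) ≤ 2 * (I + 1) * R_c := by
  apply Metric.diam_le_of_forall_dist_le (by positivity)
  intro p _ q _
  by_contra hgt
  push_neg at hgt
  obtain ⟨Γ, hΓ0, hΓL, hiso⟩ := geodesic p q
  set L : ℝ := dist p q with hL
  set R : ℝ := L / (2 * (I + 1)) with hR
  have hden : (0:ℝ) < 2 * (I + 1) := by positivity
  have hRRc : R_c < R := by
    rw [hR, lt_div_iff₀ hden]
    nlinarith [hgt]
  have hRpos : 0 < R := hRc.trans hRRc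
  have hmul : R * (2 * (I + 1)) = L := div_mul_cancel₀ _ hden.ne'
  have hparam : ∀ j : Fin (I+1), (2 * (j:ℕ) + 1) * R ∈ Set.Icc 0 L := by
    intro j
    constructor
    · positivity
    · have hj : (j:ℕ) ≤ I := Nat.lt_succ_iff.mp j.isLt
      have hj' : (2 * (j:ℕ) + 1 : ℝ) ≤ 2 * (I+1) := by
        have : ((j:ℕ):ℝ) ≤ I := by exact_mod_cast hj
        push_cast
        linarith
      calc (2 * (j:ℕ) + 1 : ℝ) * R ≤ 2 * (I+1) * R := by nlinarith
        _ = L := by rw [mul_comm]; exact hmul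
  exact hindex (fun j => Metric.ball (Γ ((2 * (j:ℕ) + 1) * R)) R)
    (fun j => ⟨Metric.isOpen_ball, hball _ _ hRRc⟩)
    (by
      intro i j hij
      have hdist : dist (Γ ((2*(i:ℕ)+1)*R)) (Γ ((2*(j:ℕ)+1)*R))
          = |(2*(i:ℕ)+1)*R - (2*(j:ℕ)+1)*R| := hiso _ (hparam i) _ (hparam j)
      have hge : R + R ≤ dist (Γ ((2*(i:ℕ)+1)*R)) (Γ ((2*(j:ℕ)+1)*R)) := by
        rw [hdist]
        have hne : ((i:ℕ):ℝ) ≠ ((j:ℕ):ℝ) := by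
          exact_mod_cast fun h => hij (Fin.ext h)
        have h1 : (1:ℝ) ≤ |((i:ℕ):ℝ) - ((j:ℕ):ℝ)| := by
          rcases lt_or_gt_of_ne hne with h | h
          · rw [abs_sub_comm, abs_of_pos (by linarith)]
            have h2 : (i:ℕ) < (j:ℕ) := by exact_mod_cast h
            have h3 : ((i:ℕ):ℝ) + 1 ≤ ((j:ℕ):ℝ) := by exact_mod_cast h2
            linarith
          · rw [abs_of_pos (by linarith)]
            have h2 : (j:ℕ) < (i:ℕ) := by exact_mod_cast h
            have h3 : ((j:ℕ):ℝ) + 1 ≤ ((i:ℕ):ℝ) := by exact_mod_cast h2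
            linarith
        have heq : (2*(i:ℕ)+1 : ℝ)*R - (2*(j:ℕ)+1)*R = 2*R*(((i:ℕ):ℝ) - ((j:ℕ):ℝ)) := by
          ring
        rw [heq, abs_mul, abs_of_pos (by positivity)]
        nlinarith
      exact Metric.ball_disjoint_ball hge)
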